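/- Triangle-like inequality for the weighted distance Γ (bivariate case): Let d, ℓ, r, s ∈ N with d ≥ ℓ, r = s − ⌊(d−ℓ)/n⌋, T ⊆ F of size n, and let Q, R ∈ F[x] be distinct polynomials of degree at most ℓ. Let g : T → F_{<r}[z] and w : T × [r] → Z_{≥0} satisfy w(a,i) ≤ (n/2)·((s−i) − (d−ℓ)/n) for all (a,i). Then Γ_w^{s,d,ℓ}(g,Q) + Γ_w^{s,d,ℓ}(g,R) ≥ n²(s − d/n). -/

import Mathlib

open Polynomial Classical

/-- `agrOrd r p` is the largest `j ∈ [r+1]` with `p ≡ 0 mod z^j`: the minimum of `r` and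
the multiplicity of `0` as a root of `p` (equal to `r` when `p = 0`). -/
noncomputable def agrOrd {F : Type*} [CommRing F] (r : ℕ) (p : Polynomial F) : ℕ :=
  if p = 0 then r else min r (p.rootMultiplicity 0)

lemma agrOrd_le {F : Type*} [CommRing F] (r : ℕ) (p : Polynomial F) : agrOrd r p ≤ r := by
  unfold agrOrd; split_ifs <;> simp

lemma X_pow_agrOrd_dvd {F : Type*} [CommRing F] (r : ℕ) (p : Polynomial F) :
    X ^ agrOrd r p ∣ p := by
  unfold agrOrd
  split_ifs with h
  · simp [h]
  · refine dvd_trans (pow_dvd_pow X (min_le_right r _)) ?_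
    simpa using Polynomial.pow_rootMultiplicity_dvd p 0

lemma dvd_of_comp_dvd {F : Type*} [CommRing F] (a : F) (S : Polynomial F) (m : ℕ)
    (h : X ^ m ∣ S.comp (X + C a)) : (X - C a) ^ m ∣ S := by
  obtain ⟨q, hq⟩ := h
  have hS : S = (S.comp (X + C a)).comp (X - C a) := by
    rw [Polynomial.comp_assoc]
    simp
  rw [hS, hq, Polynomial.mul_comp, Polynomial.pow_comp, Polynomial.X_comp]
  exact dvd_mul_right _ _

noncomputable def gammaTerm (n s d ℓ r : ℕ) (w : ℕ → ℕ) (i : ℕ) : ℚ :=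
  if i < r then
    max ((n : ℚ) * ((s : ℚ) - (i : ℚ)) - ((d : ℚ) - (ℓ : ℚ)) - (w i : ℚ))
      (((Finset.range i).sup w : ℕ) : ℚ)
  else (((Finset.range r).sup w : ℕ) : ℚ)

lemma gammaTerm_add_ge (n s d ℓ r : ℕ) (w : ℕ → ℕ) {i j : ℕ} (hij : i ≤ j) (hjr : j ≤ r)
    (hnr : (n : ℚ) * ((s : ℚ) - (r : ℚ)) ≤ (d : ℚ) - (ℓ : ℚ))
    (hwi : i < r → 2 * (w i : ℚ) ≤ (n : ℚ) * ((s : ℚ) - (i : ℚ)) - ((d : ℚ) - (ℓ : ℚ))) :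
    (n : ℚ) * ((s : ℚ) - (i : ℚ)) - ((d : ℚ) - (ℓ : ℚ)) ≤
      gammaTerm n s d ℓ r w i + gammaTerm n s d ℓ r w j := by
  by_cases hi : i < r
  · have t1 : (n : ℚ) * ((s : ℚ) - (i : ℚ)) - ((d : ℚ) - (ℓ : ℚ)) - (w i : ℚ) ≤
        gammaTerm n s d ℓ r w i := by
      unfold gammaTerm; rw [if_pos hi]; exact le_max_left _ _
    rcases eq_or_lt_of_le hij with rfl | hij'
    · have t2 : (n : ℚ) * ((s : ℚ) - (i : ℚ)) - ((d : ℚ) - (ℓ : ℚ)) - (w i : ℚ) ≤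
          gammaTerm n s d ℓ r w i := t1
      have := hwi hi
      linarith
    · have t2 : (w i : ℚ) ≤ gammaTerm n s d ℓ r w j := by
        unfold gammaTerm
        split_ifs with hj
        · refine le_trans ?_ (le_max_right _ _)
          exact_mod_cast Nat.cast_le.mpr (Finset.le_sup (Finset.mem_range.mpr hij'))
        · exact_mod_cast Nat.cast_le.mpr (Finset.le_sup (Finset.mem_range.mpr hi))
      linarith
  · have hir : i = r := le_antisymm (le_trans hij hjr) (not_lt.mp hi)
    have hjr' : j = r := le_antisymm hjr (hir ▸ hij)
    have hj : ¬ j < r := by omega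
    have h1 : (0 : ℚ) ≤ gammaTerm n s d ℓ r w i := by
      unfold gammaTerm; rw [if_neg hi]; positivity
    have h2 : (0 : ℚ) ≤ gammaTerm n s d ℓ r w j := by
      unfold gammaTerm; rw [if_neg hj]; positivity
    rw [hir] at h1 ⊢
    linarith

lemma sum_count_le {F : Type*} [DecidableEq F] (T : Finset F) (M : Multiset F) :
    ∑ a ∈ T, M.count a ≤ Multiset.card M := by
  calc ∑ a ∈ T, M.count a = ∑ a ∈ T ∩ M.toFinset, M.count a := by
        refine (Finset.sum_subset (Finset.inter_subset_left) ?_).symm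
        intro a ha hna
        rw [Multiset.count_eq_zero]
        intro hmem
        exact hna (Finset.mem_inter.mpr ⟨ha, Multiset.mem_toFinset.mpr hmem⟩)
    _ ≤ ∑ a ∈ M.toFinset, M.count a :=
        Finset.sum_le_sum_of_subset (Finset.inter_subset_right)
    _ = Multiset.card M := Multiset.toFinset_sum_count_eq M

/-- The weighted distance `Γ_w^{s,d,ℓ}(g, R)` between a fractional word `(g, w)` and a
polynomial `R`, with `n = |T|`.  For a point `a` with agreement order `i < r` the
contribution is `max{n((s−i) − (d−ℓ)/n) − w(a,i), max_{j<i} w(a,j)}`, and for agreement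
order `r` it is `max_{j<r} w(a,j)`. -/
noncomputable def Gamma {F : Type*} [Field F] (T : Finset F) (n s d ℓ r : ℕ)
    (g : F → Polynomial F) (w : F → ℕ → ℕ) (R : Polynomial F) : ℚ :=
  ∑ a ∈ T,
    (if agrOrd r (g a - R.comp (X + C a)) < r then
      max ((n : ℚ) * ((s : ℚ) - (agrOrd r (g a - R.comp (X + C a)) : ℚ)) -
          ((d : ℚ) - (ℓ : ℚ)) - (w a (agrOrd r (g a - R.comp (X + C a))) : ℚ))
        (((Finset.range (agrOrd r (g a - R.comp (X + C a)))).sup (w a) : ℕ) : ℚ)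
    else (((Finset.range r).sup (w a) : ℕ) : ℚ))

/-- Triangle-like inequality for the weighted distance `Γ` (bivariate case): for distinct
polynomials `Q, R` of degree at most `ℓ`,
`Γ_w(g,Q) + Γ_w(g,R) ≥ n²(s − d/n)`. -/
theorem gamma_triangle {F : Type*} [Field F] {n s d ℓ r : ℕ}
    (hn : 0 < n) (hℓd : ℓ ≤ d) (hr : r = s - (d - ℓ) / n)
    (T : Finset F) (hT : T.card = n)
    (Q R : Polynomial F) (hQR : Q ≠ R)
    (hQdeg : Q.natDegree ≤ ℓ) (hRdeg : R.natDegree ≤ ℓ)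
    (g : F → Polynomial F) (hg : ∀ a ∈ T, (g a).degree < (r : WithBot ℕ))
    (w : F → ℕ → ℕ)
    (hw : ∀ a ∈ T, ∀ i < r, (w a i : ℚ) ≤
      ((n : ℚ) / 2) * (((s : ℚ) - (i : ℚ)) - ((d : ℚ) - (ℓ : ℚ)) / (n : ℚ))) :
    Gamma T n s d ℓ r g w Q + Gamma T n s d ℓ r g w R ≥
      (n : ℚ) ^ 2 * ((s : ℚ) - (d : ℚ) / (n : ℚ)) := by
  classical
  have hn0 : (n : ℚ) ≠ 0 := Nat.cast_ne_zero.mpr hn.ne'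
  have hS : R - Q ≠ 0 := sub_ne_zero.mpr (Ne.symm hQR)
  set iQ : F → ℕ := fun a => agrOrd r (g a - Q.comp (X + C a)) with hiQ
  set iR : F → ℕ := fun a => agrOrd r (g a - R.comp (X + C a)) with hiR
  set m : F → ℕ := fun a => min (iQ a) (iR a) with hm
  -- each m a is at most the root multiplicity of a in R - Q
  have hmult : ∀ a ∈ T, m a ≤ (R - Q).rootMultiplicity a := by
    intro a _
    have hdQ : X ^ m a ∣ g a - Q.comp (X + C a) :=
      dvd_trans (pow_dvd_pow X (min_le_left _ _)) (X_pow_agrOrd_dvd r _)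
    have hdR : X ^ m a ∣ g a - R.comp (X + C a) :=
      dvd_trans (pow_dvd_pow X (min_le_right _ _)) (X_pow_agrOrd_dvd r _)
    have hcomp : (R - Q).comp (X + C a) =
        (g a - Q.comp (X + C a)) - (g a - R.comp (X + C a)) := by
      rw [Polynomial.sub_comp]; ring
    have hdvd : X ^ m a ∣ (R - Q).comp (X + C a) := by
      rw [hcomp]; exact dvd_sub hdQ hdR
    exact (Polynomial.le_rootMultiplicity_iff hS).mpr (dvd_of_comp_dvd a (R - Q) (m a) hdvd)
  have hsumN : ∑ a ∈ T, m a ≤ ℓ := by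
    calc ∑ a ∈ T, m a ≤ ∑ a ∈ T, (R - Q).roots.count a := by
          refine Finset.sum_le_sum fun a ha => ?_
          rw [Polynomial.count_roots]
          exact hmult a ha
      _ ≤ Multiset.card (R - Q).roots := sum_count_le T (R - Q).roots
      _ ≤ (R - Q).natDegree := Polynomial.card_roots' (R - Q)
      _ ≤ ℓ := le_trans (Polynomial.natDegree_sub_le R Q) (max_le hRdeg hQdeg)
  have hsum : ∑ a ∈ T, (m a : ℚ) ≤ (ℓ : ℚ) := by exact_mod_cast hsumN
  -- n (s - r) ≤ d - ℓ
  have hrs : r ≤ s := by rw [hr]; exact Nat.sub_le _ _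
  have h2 : s - r ≤ (d - ℓ) / n := by rw [hr]; exact tsub_tsub_le
  have h1 : n * (s - r) ≤ d - ℓ := by
    calc n * (s - r) ≤ n * ((d - ℓ) / n) := Nat.mul_le_mul_left n h2
      _ ≤ d - ℓ := by rw [mul_comm]; exact Nat.div_mul_le_self _ _
  have hnr : (n : ℚ) * ((s : ℚ) - (r : ℚ)) ≤ (d : ℚ) - (ℓ : ℚ) := by
    have hc := (Nat.cast_le (α := ℚ)).mpr h1
    push_cast [Nat.cast_sub hrs, Nat.cast_sub hℓd] at hc
    linarith
  -- per-point bound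
  have hpt : ∀ a ∈ T, (n : ℚ) * ((s : ℚ) - (m a : ℚ)) - ((d : ℚ) - (ℓ : ℚ)) ≤
      gammaTerm n s d ℓ r (w a) (iQ a) + gammaTerm n s d ℓ r (w a) (iR a) := by
    intro a ha
    have hwi2 : ∀ i < r, 2 * (w a i : ℚ) ≤
        (n : ℚ) * ((s : ℚ) - (i : ℚ)) - ((d : ℚ) - (ℓ : ℚ)) := by
      intro i hi
      have h := hw a ha i hi
      have heq : (n : ℚ) / 2 * (((s : ℚ) - (i : ℚ)) - ((d : ℚ) - (ℓ : ℚ)) / (n : ℚ)) =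
          ((n : ℚ) * ((s : ℚ) - (i : ℚ)) - ((d : ℚ) - (ℓ : ℚ))) / 2 := by
        field_simp
      rw [heq] at h; linarith
    rcases le_total (iQ a) (iR a) with hle | hle
    · have hma : m a = iQ a := min_eq_left hle
      rw [hma]
      exact gammaTerm_add_ge n s d ℓ r (w a) hle (agrOrd_le r _) hnr (fun hi => hwi2 _ hi)
    · have hma : m a = iR a := min_eq_right hle
      rw [hma, add_comm]
      exact gammaTerm_add_ge n s d ℓ r (w a) hle (agrOrd_le r _) hnr (fun hi => hwi2 _ hi)
  -- Gamma as sum of gammaTerm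
  have hGQ : Gamma T n s d ℓ r g w Q = ∑ a ∈ T, gammaTerm n s d ℓ r (w a) (iQ a) := rfl
  have hGR : Gamma T n s d ℓ r g w R = ∑ a ∈ T, gammaTerm n s d ℓ r (w a) (iR a) := rfl
  rw [ge_iff_le, hGQ, hGR, ← Finset.sum_add_distrib]
  have key : ∑ a ∈ T, ((n : ℚ) * ((s : ℚ) - (m a : ℚ)) - ((d : ℚ) - (ℓ : ℚ)))
      = (n : ℚ) * ((n : ℚ) * (s : ℚ) - ((d : ℚ) - (ℓ : ℚ)))
        - (n : ℚ) * ∑ a ∈ T, (m a : ℚ) := by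
    calc ∑ a ∈ T, ((n : ℚ) * ((s : ℚ) - (m a : ℚ)) - ((d : ℚ) - (ℓ : ℚ)))
        = ∑ a ∈ T, (((n : ℚ) * (s : ℚ) - ((d : ℚ) - (ℓ : ℚ))) - (n : ℚ) * (m a : ℚ)) :=
          Finset.sum_congr rfl (by intros; ring)
      _ = (T.card : ℚ) * ((n : ℚ) * (s : ℚ) - ((d : ℚ) - (ℓ : ℚ)))
            - ∑ a ∈ T, (n : ℚ) * (m a : ℚ) := by
          rw [Finset.sum_sub_distrib, Finset.sum_const, nsmul_eq_mul]
      _ = (n : ℚ) * ((n : ℚ) * (s : ℚ) - ((d : ℚ) - (ℓ : ℚ)))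
            - (n : ℚ) * ∑ a ∈ T, (m a : ℚ) := by rw [hT, Finset.mul_sum]
  have hsum2 : ∑ a ∈ T, ((n : ℚ) * ((s : ℚ) - (m a : ℚ)) - ((d : ℚ) - (ℓ : ℚ))) ≤
      ∑ a ∈ T, (gammaTerm n s d ℓ r (w a) (iQ a) + gammaTerm n s d ℓ r (w a) (iR a)) :=
    Finset.sum_le_sum hpt
  have hmono : (n : ℚ) * ∑ a ∈ T, (m a : ℚ) ≤ (n : ℚ) * (ℓ : ℚ) :=
    mul_le_mul_of_nonneg_left hsum (by positivity)
  have hfinal : (n : ℚ) ^ 2 * ((s : ℚ) - (d : ℚ) / (n : ℚ)) =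
      (n : ℚ) * ((n : ℚ) * (s : ℚ) - ((d : ℚ) - (ℓ : ℚ))) - (n : ℚ) * (ℓ : ℚ) := by
    field_simp; ring
  linarith
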